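/- Suppose the surrogate loss ℓ satisfies ℓ(z) − ℓ(−z) = −z for all z. Then the classification risk R(g) = π·E_{p₊}[ℓ(g(x))] + (1−π)·E_{p₋}[ℓ(−g(x))] equals π·E_{p₊}[−g(x)] + E_{p}[ℓ(−g(x))], where p = π·p₊ + (1−π)·p₋. -/
import Mathlib


open MeasureTheory

theorem pu_risk_equivalence {d : ℕ}
    (pP pN : Measure (Fin d → ℝ)) [IsProbabilityMeasure pP] [IsProbabilityMeasure pN]
    (π : ℝ) (hπ0 : 0 ≤ π) (hπ1 : π ≤ 1)
    (p : Measure (Fin d → ℝ))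
    (hp : p = ENNReal.ofReal π • pP + ENNReal.ofReal (1 - π) • pN)
    (g : (Fin d → ℝ) → ℝ) (hg : Measurable g)
    (ℓ : ℝ → ℝ) (hℓ : Measurable ℓ)
    (hcomp : ∀ z : ℝ, ℓ z - ℓ (-z) = -z)
    (hgP : Integrable g pP) (hgN : Integrable g pN)
    (hIPp : Integrable (fun x => ℓ (g x)) pP)
    (hIPm : Integrable (fun x => ℓ (-g x)) pP)
    (hINp : Integrable (fun x => ℓ (g x)) pN)
    (hINm : Integrable (fun x => ℓ (-g x)) pN) :
    π * (∫ x, ℓ (g x) ∂pP) + (1 - π) * (∫ x, ℓ (-g x) ∂pN)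
      = π * (∫ x, -g x ∂pP) + ∫ x, ℓ (-g x) ∂p := by
  have hsplit : ∫ x, ℓ (-g x) ∂p
      = π * (∫ x, ℓ (-g x) ∂pP) + (1 - π) * (∫ x, ℓ (-g x) ∂pN) := by
    rw [hp, integral_add_measure (hIPm.smul_measure (by simp))
      (hINm.smul_measure (by simp)), integral_smul_measure, integral_smul_measure,
      ENNReal.toReal_ofReal hπ0, ENNReal.toReal_ofReal (by linarith), smul_eq_mul,
      smul_eq_mul]
  have hdiff : ∫ x, ℓ (g x) ∂pP = (∫ x, -g x ∂pP) + ∫ x, ℓ (-g x) ∂pP := by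
    have : ∫ x, (ℓ (g x) - ℓ (-g x)) ∂pP = ∫ x, -g x ∂pP := by
      congr 1; ext x; exact hcomp (g x)
    rw [integral_sub hIPp hIPm] at this
    linarith
  rw [hsplit, hdiff, integral_neg]
  ring
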